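/- Let n ≥ 1 and let R = (ℤ[U₀,U₁,...,Uₙ])[[t]] be the ring of formal power series in t with coefficients in the integral multivariable polynomial ring. For every element ξ ∈ R and a = U₀ − t·ξ, there exist a unit u of R congruent to 1 modulo t, and an element b of R which is divisible by t and which lies in the subring (ℤ[U₁,...,Uₙ])[[t]] of power series whose coefficients do not involve the variable U₀, such that u·a = U₀ − b. In particular, the ideal of R generated by a equals the ideal generated by U₀ − b. -/

import Mathlib

noncomputable section Stmt2Aux

abbrev AA (n : ℕ) := MvPolynomial (Fin (n + 1)) ℤ

def ee (n : ℕ) : AA n ≃ₐ[ℤ] Polynomial (MvPolynomial (Fin n) ℤ) :=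
  MvPolynomial.finSuccEquiv ℤ n

def qd (n : ℕ) (a : AA n) : AA n := (ee n).symm ((ee n a).divX)

def pr (n : ℕ) (a : AA n) : AA n := (ee n).symm (Polynomial.C ((ee n a).coeff 0))

lemma split_eq (n : ℕ) (a : AA n) :
    a = MvPolynomial.X 0 * qd n a + pr n a := by
  apply (ee n).injective
  simp only [map_add, map_mul, qd, pr, AlgEquiv.apply_symm_apply, ee,
    MvPolynomial.finSuccEquiv_X_zero]
  exact (Polynomial.X_mul_divX_add _).symm

lemma ee_rename (n : ℕ) (p : MvPolynomial (Fin n) ℤ) :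
    ee n (MvPolynomial.rename Fin.succ p) = Polynomial.C p := by
  induction p using MvPolynomial.induction_on with
  | C a =>
      simp [ee, MvPolynomial.rename_C]
  | add p q hp hq => simp [map_add, hp, hq]
  | mul_X p i hp =>
      rw [map_mul, MvPolynomial.rename_X, map_mul, hp]
      have : ee n (MvPolynomial.X (Fin.succ i)) = Polynomial.C (MvPolynomial.X i) :=
        MvPolynomial.finSuccEquiv_X_succ
      rw [this, ← Polynomial.C_mul]

lemma pr_eq (n : ℕ) (a : AA n) :
    pr n a = MvPolynomial.rename Fin.succ ((ee n a).coeff 0) := by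
  apply (ee n).injective
  rw [ee_rename]
  simp [pr]

lemma pr_fix (n : ℕ) (a : AA n) :
    MvPolynomial.rename Fin.succ ((ee n (pr n a)).coeff 0) = pr n a := by
  have h : (ee n (pr n a)).coeff 0 = (ee n a).coeff 0 := by simp [pr]
  rw [h, ← pr_eq]

end Stmt2Aux

section Main
open PowerSeries

noncomputable def vcoef (n : ℕ) (ξ : PowerSeries (AA n)) : ℕ → AA n
  | 0 => qd n (PowerSeries.coeff 0 ξ)
  | (k + 1) => qd n (PowerSeries.coeff (k + 1) ξ +
      ∑ i ∈ (Finset.range (k + 1)).attach,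
        vcoef n ξ i.1 * PowerSeries.coeff (k - i.1) ξ)
  decreasing_by exact Finset.mem_range.mp i.2

lemma vcoef_eq (n : ℕ) (ξ : PowerSeries (AA n)) (k : ℕ) :
    vcoef n ξ k = qd n (PowerSeries.coeff k
      ((1 + PowerSeries.X * PowerSeries.mk (vcoef n ξ)) * ξ)) := by
  have hw : (1 + PowerSeries.X * PowerSeries.mk (vcoef n ξ)) * ξ
      = ξ + PowerSeries.X * (PowerSeries.mk (vcoef n ξ) * ξ) := by ring
  rw [hw]
  cases k with
  | zero =>
      rw [map_add]
      have h0 : PowerSeries.coeff (R := AA n) 0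
          (PowerSeries.X * (PowerSeries.mk (vcoef n ξ) * ξ)) = 0 := by
        simp [PowerSeries.coeff_zero_eq_constantCoeff]
      rw [h0, add_zero, vcoef]
  | succ k =>
      rw [map_add, PowerSeries.coeff_succ_X_mul, PowerSeries.coeff_mul,
        Finset.Nat.sum_antidiagonal_eq_sum_range_succ_mk]
      rw [vcoef]
      congr 2
      simp only [PowerSeries.coeff_mk]
      exact Finset.sum_attach (Finset.range (k + 1))
        (fun i => vcoef n ξ i * PowerSeries.coeff (k - i) ξ)
end Main


/-- For `n ≥ 1`, in `R = (ℤ[U₀,…,Uₙ])[[t]]`, for every `ξ ∈ R` and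
`a = U₀ − t·ξ`, there exist a unit `u` of `R` congruent to `1` modulo `t`, and an element
`b` divisible by `t` whose coefficients do not involve `U₀` (i.e. `b` lies in the image of
`(ℤ[U₁,…,Uₙ])[[t]]` under the variable inclusion `i ↦ i+1`), with `u·a = U₀ − b`.
In particular `(a) = (U₀ − b)`. -/
theorem stmt_2 (n : ℕ) (hn : 1 ≤ n)
    (ξ : PowerSeries (MvPolynomial (Fin (n + 1)) ℤ)) :
    ∃ (u : (PowerSeries (MvPolynomial (Fin (n + 1)) ℤ))ˣ)
      (b : PowerSeries (MvPolynomial (Fin (n + 1)) ℤ)),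
      ((u : PowerSeries (MvPolynomial (Fin (n + 1)) ℤ)) - 1 ∈
          Ideal.span {(PowerSeries.X : PowerSeries (MvPolynomial (Fin (n + 1)) ℤ))}) ∧
      ((PowerSeries.X : PowerSeries (MvPolynomial (Fin (n + 1)) ℤ)) ∣ b) ∧
      (b ∈ Set.range
          (PowerSeries.map
            (MvPolynomial.rename (Fin.succ : Fin n → Fin (n + 1)) :
              MvPolynomial (Fin n) ℤ →ₐ[ℤ] MvPolynomial (Fin (n + 1)) ℤ).toRingHom)) ∧
      ((u : PowerSeries (MvPolynomial (Fin (n + 1)) ℤ)) *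
          (PowerSeries.C (R := MvPolynomial (Fin (n + 1)) ℤ) (MvPolynomial.X 0)
            - PowerSeries.X * ξ)
        = PowerSeries.C (R := MvPolynomial (Fin (n + 1)) ℤ) (MvPolynomial.X 0) - b) ∧
      (Ideal.span {PowerSeries.C (R := MvPolynomial (Fin (n + 1)) ℤ) (MvPolynomial.X 0)
            - PowerSeries.X * ξ}
        = Ideal.span {PowerSeries.C (R := MvPolynomial (Fin (n + 1)) ℤ) (MvPolynomial.X 0) - b}) := by
  classical
  set v : PowerSeries (AA n) := PowerSeries.mk (vcoef n ξ) with hv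
  set w : PowerSeries (AA n) := (1 + PowerSeries.X * v) * ξ with hwdef
  set β : PowerSeries (AA n) :=
    w - PowerSeries.C (R := AA n) (MvPolynomial.X 0) * v with hβ
  set b : PowerSeries (AA n) := PowerSeries.X * β with hbdef
  have hu : IsUnit (1 + PowerSeries.X * v) := by
    rw [PowerSeries.isUnit_iff_constantCoeff]
    simp
  have hunit : (hu.unit : PowerSeries (AA n)) = 1 + PowerSeries.X * v := hu.unit_spec
  have hvk : ∀ k, PowerSeries.coeff (R := AA n) k v
      = qd n (PowerSeries.coeff (R := AA n) k w) := by
    intro k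
    rw [hv, PowerSeries.coeff_mk, vcoef_eq]
  have hbk : ∀ k, PowerSeries.coeff (R := AA n) (k + 1) b
      = pr n (PowerSeries.coeff (R := AA n) k w) := by
    intro k
    rw [hbdef, PowerSeries.coeff_succ_X_mul, hβ, map_sub, PowerSeries.coeff_C_mul,
      hvk k]
    nth_rewrite 1 [split_eq n (PowerSeries.coeff (R := AA n) k w)]
    ring
  have hmain : (hu.unit : PowerSeries (AA n)) *
      (PowerSeries.C (R := AA n) (MvPolynomial.X 0) - PowerSeries.X * ξ)
      = PowerSeries.C (R := AA n) (MvPolynomial.X 0) - b := by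
    rw [hunit, hbdef, hβ, hwdef]
    ring
  refine ⟨hu.unit, b, ?_, ⟨β, rfl⟩, ?_, hmain, ?_⟩
  · rw [hunit]
    exact Ideal.mem_span_singleton.mpr ⟨v, by ring⟩
  · refine ⟨PowerSeries.mk (fun k => (ee n (PowerSeries.coeff (R := AA n) k b)).coeff 0), ?_⟩
    refine PowerSeries.ext fun k => ?_
    rw [PowerSeries.coeff_map, PowerSeries.coeff_mk]
    show MvPolynomial.rename Fin.succ ((ee n (PowerSeries.coeff (R := AA n) k b)).coeff 0)
      = PowerSeries.coeff (R := AA n) k b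
    cases k with
    | zero =>
        have h0 : PowerSeries.coeff (R := AA n) 0 b = 0 := by
          rw [hbdef]
          simp [PowerSeries.coeff_zero_eq_constantCoeff]
        rw [h0]
        simp
    | succ k =>
        rw [hbk k]
        exact pr_fix n _
  · exact Ideal.span_singleton_eq_span_singleton.mpr
      ⟨hu.unit, by rw [mul_comm]; exact hmain⟩
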